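/- Let X be a Banach space, 1 < p < ∞, and A := {(u,x,y) ∈ X × L^p([a,b],X) × L^p([a,b],X) : x(t) = u + ∫_a^t y(s) ds for all t ∈ [a,b]}. If (u,x,y) ∈ A and (u*, x*, y*) belongs to the normal cone N_A(u,x,y), then y*(t) = −∫_t^b x*(s) ds for all t ∈ [a,b] and u* = y*(a) = −∫_a^b x*(s) ds. -/

import Mathlib

open MeasureTheory Topology Filter Set Pointwise
open scoped ENNReal NNReal

noncomputable section

/-- Lower semicontinuity (in the set-valued sense) of `Φ` at every point of `B`,
relative to `B`. -/
def LscOn {T Y : Type*} [TopologicalSpace T] [TopologicalSpace Y]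
    (B : Set T) (Φ : T → Set Y) : Prop :=
  ∀ t ∈ B, ∀ V : Set Y, IsOpen V → (Φ t ∩ V).Nonempty →
    ∀ᶠ s in nhdsWithin t B, (Φ s ∩ V).Nonempty

/-- Epigraph of an extended-real-valued function. -/
def epi {X : Type*} (g : X → EReal) : Set (X × ℝ) :=
  {p : X × ℝ | g p.1 ≤ (p.2 : EReal)}

/-- Strict epigraph. -/
def epis {X : Type*} (g : X → EReal) : Set (X × ℝ) :=
  {p : X × ℝ | g p.1 < (p.2 : EReal)}

/-- Inner regularity of a measure: every measurable set of finite measure can be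
approximated from inside by compact sets. -/
def InnerRegularM {T : Type*} [TopologicalSpace T] [MeasurableSpace T]
    (μ : Measure T) : Prop :=
  ∀ ε : ℝ≥0∞, 0 < ε → ∀ B : Set T, MeasurableSet B → μ B < ⊤ →
    ∃ K ⊆ B, IsCompact K ∧ μ (B \ K) < ε

/-- Lusin integrand. -/
def LusinIntegrand {T X : Type*} [TopologicalSpace T] [MeasurableSpace T]
    [TopologicalSpace X] (μ : Measure T) (f : T → X → EReal) : Prop :=
  ∀ ε : ℝ≥0∞, 0 < ε → ∀ A : Set T, MeasurableSet A → μ A < ⊤ →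
    ∃ B ⊆ A, IsCompact B ∧ μ (A \ B) < ε ∧ LscOn B (fun t => epi (f t))

/-- Uniform Lusin family of integrands. -/
def UniformLusinFamily {T X I : Type*} [TopologicalSpace T] [MeasurableSpace T]
    [TopologicalSpace X] (μ : Measure T) (f : I → T → X → EReal) : Prop :=
  ∀ ε : ℝ≥0∞, 0 < ε → ∀ A : Set T, MeasurableSet A → μ A < ⊤ →
    ∃ B ⊆ A, IsCompact B ∧ μ (A \ B) < ε ∧ ∀ i : I, LscOn B (fun t => epi (f i t))

/-- Scorza-Dragoni function. -/
def ScorzaDragoniFun {T X : Type*} [TopologicalSpace T] [MeasurableSpace T]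
    [TopologicalSpace X] (μ : Measure T) (g : T → X → EReal) : Prop :=
  ∀ ε : ℝ≥0∞, 0 < ε → ∀ A : Set T, MeasurableSet A → μ A < ⊤ →
    ∃ B ⊆ A, IsCompact B ∧ μ (A \ B) < ε ∧
      ContinuousOn (fun p : T × X => g p.1 p.2) (B ×ˢ (Set.univ : Set X))

/-- Lusin multifunction (uniform family version). -/
def UniformLusinMultifamily {T X I : Type*} [TopologicalSpace T] [MeasurableSpace T]
    [TopologicalSpace X] (μ : Measure T) (C : I → T → Set X) : Prop :=
  ∀ ε : ℝ≥0∞, 0 < ε → ∀ A : Set T, MeasurableSet A → μ A < ⊤ →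
    ∃ B ⊆ A, IsCompact B ∧ μ (A \ B) < ε ∧ ∀ i : I, LscOn B (C i)

/-- `g ∈ Γ(X)`: proper, convex (convex epigraph) and lower semicontinuous. -/
def InGamma {X : Type*} [AddCommGroup X] [Module ℝ X] [TopologicalSpace X]
    (g : X → EReal) : Prop :=
  (∃ x, g x ≠ ⊤) ∧ (∀ x, g x ≠ ⊥) ∧ LowerSemicontinuous g ∧ Convex ℝ (epi g)

/-- Admissible integrand. -/
def AdmissibleIntegrand {T X : Type*} [TopologicalSpace T] [MeasurableSpace T]
    [NormedAddCommGroup X] [NormedSpace ℝ X] (μ : Measure T)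
    (f : T → X → EReal) : Prop :=
  ∃ (I : Type) (fi : I → T → X → EReal),
    UniformLusinFamily μ fi ∧ (∀ i t, InGamma (fi i t)) ∧
    ∀ t, epi (f t) = closure (epi (fun x => ⨅ i : I, fi i t x))

/-- Admissible multifunction. -/
def AdmissibleMultifunction {T X : Type*} [TopologicalSpace T] [MeasurableSpace T]
    [NormedAddCommGroup X] [NormedSpace ℝ X] (μ : Measure T)
    (C : T → Set X) : Prop :=
  ∃ (I : Type) (Ci : I → T → Set X),
    UniformLusinMultifamily μ Ci ∧ (∀ i t, IsClosed (Ci i t) ∧ Convex ℝ (Ci i t)) ∧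
    ∀ t, C t = closure (⋃ i : I, Ci i t)

open Classical in
/-- Indicator function with values in `EReal`. -/
def indE {X : Type*} (S : Set X) : X → EReal := fun x => if x ∈ S then 0 else ⊤

/-- Positive part of an extended real, as an `ℝ≥0∞`. -/
def ERealPos (x : EReal) : ℝ≥0∞ := if x = ⊤ then ⊤ else ENNReal.ofReal x.toReal

/-- Upper integral of an extended-real-valued function, with the convention
`+∞ + (-∞) = +∞`. -/
def upInt {T : Type*} [MeasurableSpace T] (μ : Measure T) (g : T → EReal) : EReal :=
  if (∫⁻ t, ERealPos (g t) ∂μ) = ⊤ then ⊤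
  else ((∫⁻ t, ERealPos (g t) ∂μ : ℝ≥0∞) : EReal) - ((∫⁻ t, ERealPos (-(g t)) ∂μ : ℝ≥0∞) : EReal)

end


lemma aux_exists_near_norm {X : Type*} [NormedAddCommGroup X] [NormedSpace ℝ X]
    (φ : X →L[ℝ] ℝ) (ε : ℝ) (hε : 0 < ε) :
    ∃ w : X, ‖w‖ ≤ 1 ∧ ‖φ‖ - ε ≤ ‖φ w‖ := by
  by_cases h : ‖φ‖ - ε ≤ 0
  · exact ⟨0, by simp, by simpa using h⟩
  push_neg at h
  by_contra hc
  push_neg at hc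
  have hb : ‖φ‖ ≤ ‖φ‖ - ε := by
    apply ContinuousLinearMap.opNorm_le_bound _ h.le
    intro z
    rcases eq_or_ne z 0 with rfl | hz
    · simp
    · have hzn : 0 < ‖z‖ := norm_pos_iff.mpr hz
      have h2 := hc (‖z‖⁻¹ • z)
        (by rw [norm_smul, norm_inv, norm_norm, inv_mul_cancel₀ hzn.ne'])
      rw [_root_.map_smul, norm_smul, norm_inv, norm_norm] at h2
      have := h2.le
      rw [inv_mul_le_iff₀ hzn] at this
      linarith [this]
  linarith

lemma aux_zero_of_vanish {X : Type*} [NormedAddCommGroup X] [NormedSpace ℝ X]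
    (f : ℕ → X →L[ℝ] ℝ) (V : ℕ → ℕ → X)
    (hV1 : ∀ n k, ‖V n k‖ ≤ 1) (hV2 : ∀ n k, ‖f n‖ - 1/(k+1) ≤ ‖(f n) (V n k)‖)
    (φ : X →L[ℝ] ℝ) (hφ : φ ∈ closure (Set.range f))
    (h0 : ∀ n k, φ (V n k) = 0) : φ = 0 := by
  have key : ∀ ε : ℝ, 0 < ε → ‖φ‖ ≤ ε := by
    intro ε hε
    obtain ⟨ψ', hψ'c, hd⟩ := Metric.mem_closure_iff.1 hφ (ε/3) (by linarith)
    obtain ⟨n, rfl⟩ := hψ'c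
    obtain ⟨k, hk⟩ := exists_nat_one_div_lt (show (0:ℝ) < ε/3 by linarith)
    have e1 : ‖φ - f n‖ < ε/3 := by rwa [← dist_eq_norm]
    have e2 : ‖f n (V n k)‖ ≤ ‖f n - φ‖ := by
      have he : f n (V n k) = (f n - φ) (V n k) := by simp [h0 n k]
      rw [he]
      calc ‖(f n - φ) (V n k)‖ ≤ ‖f n - φ‖ * ‖V n k‖ := (f n - φ).le_opNorm _
      _ ≤ ‖f n - φ‖ * 1 := mul_le_mul_of_nonneg_left (hV1 n k) (norm_nonneg _)
      _ = ‖f n - φ‖ := mul_one _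
    have e4 : ‖f n - φ‖ = ‖φ - f n‖ := norm_sub_rev _ _
    have e5 := hV2 n k
    have e6 : ‖φ‖ ≤ ‖f n‖ + ‖φ - f n‖ := by
      calc ‖φ‖ = ‖f n + (φ - f n)‖ := by rw [add_sub_cancel]
      _ ≤ ‖f n‖ + ‖φ - f n‖ := norm_add_le _ _
    have hk1 : (1:ℝ)/(k+1) < ε/3 := by exact_mod_cast hk
    linarith
  have hn : ‖φ‖ ≤ 0 := by
    by_contra hcon
    push_neg at hcon
    linarith [key (‖φ‖/2) (by linarith)]
  exact norm_le_zero_iff.1 hn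


set_option maxHeartbeats 1000000
set_option synthInstance.maxHeartbeats 400000

/-- Dubois-Reymond lemma: description of the normal cone to the set of
triples `(u, x, y)` with `x(t) = u + ∫_a^t y(s) ds`. -/
theorem stmt19 {X : Type*} [NormedAddCommGroup X] [NormedSpace ℝ X] [CompleteSpace X]
    (p q : ℝ≥0∞) [Fact (1 ≤ p)] [Fact (1 ≤ q)]
    (hp1 : 1 < p) (hp2 : p ≠ ⊤) (hpq : 1/p + 1/q = 1)
    (a b : ℝ) (hab : a ≤ b)
    (A : Set (X × MeasureTheory.Lp X p (MeasureTheory.volume.restrict (Set.Icc a b)) ×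
      MeasureTheory.Lp X p (MeasureTheory.volume.restrict (Set.Icc a b))))
    (hA : A = {z | ∀ᵐ t ∂(MeasureTheory.volume.restrict (Set.Icc a b)),
        z.2.1 t = z.1 + ∫ s in Set.Icc a t, z.2.2 s})
    (u : X) (x y : MeasureTheory.Lp X p (MeasureTheory.volume.restrict (Set.Icc a b)))
    (hz : (u, x, y) ∈ A)
    (us : X →L[ℝ] ℝ)
    (xs ys : MeasureTheory.Lp (X →L[ℝ] ℝ) q (MeasureTheory.volume.restrict (Set.Icc a b)))
    (hN : ∀ w ∈ A,
      us (w.1 - u) + (∫ t in Set.Icc a b, (xs t) (w.2.1 t - x t)) +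
        (∫ t in Set.Icc a b, (ys t) (w.2.2 t - y t)) ≤ 0) :
    (∀ᵐ t ∂(MeasureTheory.volume.restrict (Set.Icc a b)),
        ys t = - ∫ s in Set.Icc t b, xs s) ∧
    us = - ∫ t in Set.Icc a b, xs t := by
  classical
  have hq1 : (1:ℝ≥0∞) ≤ q := Fact.out
  have hp1' : (1:ℝ≥0∞) ≤ p := Fact.out
  subst hA
  haveI hfin : IsFiniteMeasure (volume.restrict (Set.Icc a b)) := ⟨by
    rw [Measure.restrict_apply_univ]; exact measure_Icc_lt_top⟩
  have hxsint : Integrable (fun t => (xs t : X →L[ℝ] ℝ)) (volume.restrict (Set.Icc a b)) := (Lp.memLp xs).integrable hq1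
  have hysint : Integrable (fun t => (ys t : X →L[ℝ] ℝ)) (volume.restrict (Set.Icc a b)) := (Lp.memLp ys).integrable hq1
  have hyint : Integrable (fun t => (y t : X)) (volume.restrict (Set.Icc a b)) := (Lp.memLp y).integrable hp1'
  have hIccSub : ∀ {t : ℝ}, t ∈ Set.Icc a b → Set.Icc a t ⊆ Set.Icc a b :=
    fun ht => Set.Icc_subset_Icc le_rfl ht.2
  have haemono : ∀ {t : ℝ}, t ∈ Set.Icc a b →
      (volume.restrict (Set.Icc a t)) ≤ (volume.restrict (Set.Icc a b)) :=
    fun ht => Measure.restrict_mono (hIccSub ht) le_rfl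
  have hyOn : IntegrableOn (fun s => (y s : X)) (Set.Icc a b) volume := hyint
  have hxsOn : IntegrableOn (fun t => (xs t : X →L[ℝ] ℝ)) (Set.Icc a b) volume := hxsint
  have hzae : ∀ᵐ t ∂(volume.restrict (Set.Icc a b)), (x t : X) = u + ∫ s in Set.Icc a t, y s := hz
  -- KEY INEQUALITY
  have key : ∀ (v : X) (g : ℝ → X), MemLp g p (volume.restrict (Set.Icc a b)) →
      us v + (∫ t, (xs t) (v + ∫ s in Set.Icc a t, g s) ∂(volume.restrict (Set.Icc a b))) + (∫ t, (ys t) (g t) ∂(volume.restrict (Set.Icc a b))) ≤ 0 := by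
    intro v g hg
    have hgi : Integrable g (volume.restrict (Set.Icc a b)) := hg.integrable hp1'
    have hgOn : IntegrableOn g (Set.Icc a b) volume := hgi
    set h0 : ℝ → X := (Set.Icc a b).indicator g with hh0def
    have hh0i : Integrable h0 volume := by
      rw [hh0def]; exact MeasureTheory.IntegrableOn.integrable_indicator hgOn measurableSet_Icc
    set G : ℝ → X := fun t => v + ∫ s in Set.Icc a t, g s with hGdef
    have hGeq : ∀ t ∈ Set.Icc a b, G t = v + ∫ s in a..t, h0 s := by
      intro t ht
      have e : ∫ s in Set.Icc a t, g s = ∫ s in a..t, h0 s := by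
        rw [intervalIntegral.integral_of_le ht.1, ← integral_Icc_eq_integral_Ioc]
        exact setIntegral_congr_fun measurableSet_Icc
          (fun s hs => (Set.indicator_of_mem (hIccSub ht hs) g).symm)
      rw [hGdef]
      simpa using e
    have hprim : Continuous fun t => v + ∫ s in a..t, h0 s :=
      continuous_const.add (hh0i.continuous_primitive a)
    have hGae : G =ᵐ[(volume.restrict (Set.Icc a b))] fun t => v + ∫ s in a..t, h0 s := by
      filter_upwards [ae_restrict_mem (μ := volume) measurableSet_Icc] with t ht
      exact hGeq t ht
    have hGm : AEStronglyMeasurable G (volume.restrict (Set.Icc a b)) := hprim.aestronglyMeasurable.congr hGae.symm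
    have hGbd : ∀ᵐ t ∂(volume.restrict (Set.Icc a b)), ‖G t‖ ≤ ‖v‖ + ∫ s in Set.Icc a b, ‖g s‖ := by
      filter_upwards [ae_restrict_mem (μ := volume) measurableSet_Icc] with t ht
      have h1 : ‖G t‖ ≤ ‖v‖ + ‖∫ s in Set.Icc a t, g s‖ := norm_add_le _ _
      have h2 : ‖∫ s in Set.Icc a t, g s‖ ≤ ∫ s in Set.Icc a t, ‖g s‖ :=
        norm_integral_le_integral_norm _
      have h3 : ∫ s in Set.Icc a t, ‖g s‖ ≤ ∫ s in Set.Icc a b, ‖g s‖ :=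
        setIntegral_mono_set hgOn.norm (Eventually.of_forall fun s => norm_nonneg _)
          ((hIccSub ht).eventuallyLE)
      linarith
    have hGmem : MemLp G p (volume.restrict (Set.Icc a b)) := MemLp.of_bound hGm _ hGbd
    set Xw : Lp X p (volume.restrict (Set.Icc a b)) := hGmem.toLp G with hXwdef
    set Yw : Lp X p (volume.restrict (Set.Icc a b)) := hg.toLp g with hYwdef
    have hadd1 := Lp.coeFn_add x Xw
    have hadd2 := Lp.coeFn_add y Yw
    have htl1 : (Xw : ℝ → X) =ᵐ[(volume.restrict (Set.Icc a b))] G := hGmem.coeFn_toLp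
    have htl2 : (Yw : ℝ → X) =ᵐ[(volume.restrict (Set.Icc a b))] g := hg.coeFn_toLp
    have hyg : (fun s => ((y + Yw : Lp X p (volume.restrict (Set.Icc a b))) s : X)) =ᵐ[(volume.restrict (Set.Icc a b))] fun s => y s + g s :=
      hadd2.trans (EventuallyEq.add (EventuallyEq.refl _ _) htl2)
    have hwA : ((u + v, x + Xw, y + Yw) :
        X × Lp X p (volume.restrict (Set.Icc a b)) × Lp X p (volume.restrict (Set.Icc a b))) ∈ {z : X × Lp X p (volume.restrict (Set.Icc a b)) × Lp X p (volume.restrict (Set.Icc a b)) |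
          ∀ᵐ t ∂(volume.restrict (Set.Icc a b)), (z.2.1 t : X) = z.1 + ∫ s in Set.Icc a t, z.2.2 s} := by
      rw [Set.mem_setOf_eq]
      filter_upwards [hzae, hadd1, htl1, ae_restrict_mem (μ := volume) measurableSet_Icc]
        with t h1 h2 h3 ht
      have hint : ∫ s in Set.Icc a t, ((y + Yw : Lp X p (volume.restrict (Set.Icc a b))) s : X)
          = (∫ s in Set.Icc a t, y s) + ∫ s in Set.Icc a t, g s := by
        rw [integral_congr_ae (hyg.filter_mono (ae_mono (haemono ht)))]
        exact integral_add (hyOn.mono_set (hIccSub ht)) (hgOn.mono_set (hIccSub ht))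
      show ((x + Xw : Lp X p (volume.restrict (Set.Icc a b))) t : X) = (u + v) + ∫ s in Set.Icc a t, ((y + Yw : Lp X p (volume.restrict (Set.Icc a b))) s : X)
      rw [h2, hint]
      simp only [Pi.add_apply]
      rw [h1, h3, hGdef]
      abel
    have hle := hN (u + v, x + Xw, y + Yw) hwA
    simp only [add_sub_cancel_left] at hle
    have e1 : (∫ t, (xs t) (((x + Xw : Lp X p (volume.restrict (Set.Icc a b))) t : X) - x t) ∂(volume.restrict (Set.Icc a b)))
        = ∫ t, (xs t) (v + ∫ s in Set.Icc a t, g s) ∂(volume.restrict (Set.Icc a b)) := by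
      refine integral_congr_ae ?_
      filter_upwards [hadd1, htl1] with t h2 h3
      rw [h2]
      simp only [Pi.add_apply]
      rw [h3, hGdef]
      congr 1
      abel
    have e2 : (∫ t, (ys t) (((y + Yw : Lp X p (volume.restrict (Set.Icc a b))) t : X) - y t) ∂(volume.restrict (Set.Icc a b)))
        = ∫ t, (ys t) (g t) ∂(volume.restrict (Set.Icc a b)) := by
      refine integral_congr_ae ?_
      filter_upwards [hadd2, htl2] with t h2 h3
      rw [h2]
      simp only [Pi.add_apply]
      rw [h3]
      congr 1
      abel
    rw [e1, e2] at hle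
    exact hle
  -- EQUALITY VERSION
  have keyEq : ∀ (v : X) (g : ℝ → X), MemLp g p (volume.restrict (Set.Icc a b)) →
      us v + (∫ t, (xs t) (v + ∫ s in Set.Icc a t, g s) ∂(volume.restrict (Set.Icc a b))) + (∫ t, (ys t) (g t) ∂(volume.restrict (Set.Icc a b))) = 0 := by
    intro v g hg
    have h1 := key v g hg
    have h2 := key (-v) (-g) hg.neg
    have e1 : (∫ t, (xs t) (-v + ∫ s in Set.Icc a t, (-g) s) ∂(volume.restrict (Set.Icc a b)))
        = -∫ t, (xs t) (v + ∫ s in Set.Icc a t, g s) ∂(volume.restrict (Set.Icc a b)) := by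
      rw [← integral_neg]
      refine integral_congr_ae (Eventually.of_forall fun t => ?_)
      have hn : ∫ s in Set.Icc a t, (-g) s = -∫ s in Set.Icc a t, g s := by
        simpa using integral_neg (μ := volume.restrict (Set.Icc a t)) g
      show (xs t) (-v + ∫ s in Set.Icc a t, (-g) s) = -(xs t) (v + ∫ s in Set.Icc a t, g s)
      rw [hn, ← _root_.map_neg (xs t), neg_add]
    have e2 : (∫ t, (ys t) ((-g) t) ∂(volume.restrict (Set.Icc a b))) = -∫ t, (ys t) (g t) ∂(volume.restrict (Set.Icc a b)) := by
      rw [← integral_neg]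
      refine integral_congr_ae (Eventually.of_forall fun t => ?_)
      show (ys t) ((-g) t) = -(ys t) (g t)
      simp
    rw [e1, e2, _root_.map_neg] at h2
    linarith
  -- STEP B : identify us
  have husEq : us = - ∫ t, (xs t : X →L[ℝ] ℝ) ∂(volume.restrict (Set.Icc a b)) := by
    ext v
    have h1 := keyEq v 0 MemLp.zero
    simp only [Pi.zero_apply, integral_zero, add_zero, _root_.map_zero] at h1
    have h2 : (∫ t, (xs t : X →L[ℝ] ℝ) ∂(volume.restrict (Set.Icc a b))) v = ∫ t, (xs t) v ∂(volume.restrict (Set.Icc a b)) :=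
      ContinuousLinearMap.integral_apply hxsint v
    simp only [ContinuousLinearMap.neg_apply]
    rw [h2]
    linarith
  -- ψ : the tail integral
  set ψ : ℝ → (X →L[ℝ] ℝ) := fun s => ∫ t in Set.Icc s b, xs t with hψdef
  set H0 : ℝ → (X →L[ℝ] ℝ) := (Set.Icc a b).indicator (fun t => xs t) with hH0def
  have hH0i : Integrable H0 volume := by
    rw [hH0def]; exact MeasureTheory.IntegrableOn.integrable_indicator (f := fun t => (xs t : X →L[ℝ] ℝ)) hxsOn measurableSet_Icc
  have hψeq : ∀ s ∈ Set.Icc a b, ψ s = ∫ t in s..b, H0 t := by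
    intro s hs
    rw [hψdef]
    simp only
    rw [intervalIntegral.integral_of_le hs.2, ← integral_Icc_eq_integral_Ioc]
    exact setIntegral_congr_fun measurableSet_Icc
      (fun t ht => (Set.indicator_of_mem (Set.Icc_subset_Icc hs.1 le_rfl ht) _).symm)
  have hψcont : Continuous fun s => ∫ t in s..b, H0 t := by
    have hc : Continuous fun s => (∫ t in a..b, H0 t) - ∫ t in a..s, H0 t :=
      continuous_const.sub (hH0i.continuous_primitive a)
    exact hc.congr fun s => intervalIntegral.integral_interval_sub_left
      hH0i.intervalIntegrable hH0i.intervalIntegrable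
  have hψae : ψ =ᵐ[(volume.restrict (Set.Icc a b))] fun s => ∫ t in s..b, H0 t := by
    filter_upwards [ae_restrict_mem (μ := volume) measurableSet_Icc] with s hs
    exact hψeq s hs
  have hψm : AEStronglyMeasurable ψ (volume.restrict (Set.Icc a b)) := hψcont.aestronglyMeasurable.congr hψae.symm
  have hψbd : ∀ᵐ s ∂(volume.restrict (Set.Icc a b)), ‖ψ s‖ ≤ ∫ t in Set.Icc a b, ‖xs t‖ := by
    filter_upwards [ae_restrict_mem (μ := volume) measurableSet_Icc] with s hs
    have h2 : ‖ψ s‖ ≤ ∫ t in Set.Icc s b, ‖xs t‖ := norm_integral_le_integral_norm _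
    have h3 : ∫ t in Set.Icc s b, ‖xs t‖ ≤ ∫ t in Set.Icc a b, ‖xs t‖ :=
      setIntegral_mono_set hxsOn.norm (Eventually.of_forall fun t => norm_nonneg _)
        ((Set.Icc_subset_Icc hs.1 le_rfl).eventuallyLE)
    linarith
  have hψvint : ∀ v : X, Integrable (fun s => (ψ s) v) (volume.restrict (Set.Icc a b)) := by
    intro v
    refine Integrable.mono' (integrable_const ((∫ t in Set.Icc a b, ‖xs t‖) * ‖v‖))
      ((ContinuousLinearMap.apply ℝ ℝ v).continuous.comp_aestronglyMeasurable hψm) ?_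
    filter_upwards [hψbd] with s hs
    exact ((ψ s).le_opNorm v).trans (mul_le_mul_of_nonneg_right hs (norm_nonneg v))
  have hysvint : ∀ v : X, Integrable (fun s => (ys s) v) (volume.restrict (Set.Icc a b)) := by
    intro v
    refine Integrable.mono' (hysint.norm.mul_const ‖v‖)
      ((ContinuousLinearMap.apply ℝ ℝ v).continuous.comp_aestronglyMeasurable
        (Lp.aestronglyMeasurable ys)) ?_
    exact Eventually.of_forall fun s => (ys s).le_opNorm v
  -- STEP C
  have stepC : ∀ (v : X) (E : Set ℝ), MeasurableSet E →
      ∫ s in E, ((ψ s) v + (ys s) v) ∂(volume.restrict (Set.Icc a b)) = 0 := by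
    intro v E hE
    set g : ℝ → X := E.indicator (fun _ => v) with hgdef
    have hgmem : MemLp g p (volume.restrict (Set.Icc a b)) := memLp_indicator_const p hE v (Or.inr (measure_ne_top (volume.restrict (Set.Icc a b)) E))
    have hgi : Integrable g (volume.restrict (Set.Icc a b)) := hgmem.integrable hp1'
    have h1 := keyEq 0 g hgmem
    simp only [_root_.map_zero, zero_add] at h1
    -- Fubini
    set F : ℝ → ℝ → ℝ := fun t s => if a ≤ s ∧ s ≤ t then (xs t) (g s) else 0 with hFdef
    have hF1 : ∀ᵐ t ∂(volume.restrict (Set.Icc a b)), (xs t) (∫ s in Set.Icc a t, g s) = ∫ s, F t s ∂(volume.restrict (Set.Icc a b)) := by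
      filter_upwards [ae_restrict_mem (μ := volume) measurableSet_Icc] with t ht
      have hri : (volume.restrict (Set.Icc a b)).restrict (Set.Icc a t) = volume.restrict (Set.Icc a t) := by
        rw [Measure.restrict_restrict measurableSet_Icc,
          Set.inter_eq_self_of_subset_left (hIccSub ht)]
      have e0 : ∫ s in Set.Icc a t, g s = ∫ s in Set.Icc a t, g s ∂(volume.restrict (Set.Icc a b)) := by rw [hri]
      rw [e0, ← ContinuousLinearMap.integral_comp_comm (xs t)
        (hgi.mono_measure Measure.restrict_le_self), ← integral_indicator measurableSet_Icc]
      refine integral_congr_ae (Eventually.of_forall fun s => ?_)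
      simp [hFdef, Set.indicator_apply, Set.mem_Icc]
    have hF2 : Integrable (Function.uncurry F) ((volume.restrict (Set.Icc a b)).prod (volume.restrict (Set.Icc a b))) := by
      have hxs' : AEStronglyMeasurable (fun z : ℝ × ℝ => (xs z.1 : X →L[ℝ] ℝ)) ((volume.restrict (Set.Icc a b)).prod (volume.restrict (Set.Icc a b))) :=
        (Lp.aestronglyMeasurable xs).comp_fst
      have hg' : AEStronglyMeasurable (fun z : ℝ × ℝ => g z.2) ((volume.restrict (Set.Icc a b)).prod (volume.restrict (Set.Icc a b))) :=
        ((stronglyMeasurable_const.indicator hE).aestronglyMeasurable).comp_snd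
      have happ : AEStronglyMeasurable (fun z : ℝ × ℝ => (xs z.1) (g z.2)) ((volume.restrict (Set.Icc a b)).prod (volume.restrict (Set.Icc a b))) :=
        isBoundedBilinearMap_apply.continuous.comp_aestronglyMeasurable (hxs'.prodMk hg')
      have hset : MeasurableSet {z : ℝ × ℝ | a ≤ z.2 ∧ z.2 ≤ z.1} :=
        (measurableSet_le measurable_const measurable_snd).inter
          (measurableSet_le measurable_snd measurable_fst)
      have hmeas : AEStronglyMeasurable (Function.uncurry F) ((volume.restrict (Set.Icc a b)).prod (volume.restrict (Set.Icc a b))) := by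
        have he : Function.uncurry F
            = Set.indicator {z : ℝ × ℝ | a ≤ z.2 ∧ z.2 ≤ z.1} (fun z => (xs z.1) (g z.2)) := by
          funext z
          simp [Function.uncurry, hFdef, Set.indicator_apply, Set.mem_setOf_eq]
        rw [he]
        exact happ.indicator hset
      refine Integrable.mono' ((hxsint.norm).mul_prod (hgi.norm)) hmeas ?_
      refine Eventually.of_forall fun z => ?_
      simp only [Function.uncurry, hFdef]
      split_ifs with h
      · exact ContinuousLinearMap.le_opNorm _ _
      · simp only [norm_zero]
        positivity
    have hswap : ∫ t, (∫ s, F t s ∂(volume.restrict (Set.Icc a b))) ∂(volume.restrict (Set.Icc a b)) = ∫ s, (∫ t, F t s ∂(volume.restrict (Set.Icc a b))) ∂(volume.restrict (Set.Icc a b)) :=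
      integral_integral_swap hF2
    have hF3 : ∀ᵐ s ∂(volume.restrict (Set.Icc a b)), (∫ t, F t s ∂(volume.restrict (Set.Icc a b))) = Set.indicator E (fun s => (ψ s) v) s := by
      filter_upwards [ae_restrict_mem (μ := volume) measurableSet_Icc] with s hs
      have e1 : (fun t => F t s) = Set.indicator (Set.Ici s) (fun t => (xs t) (g s)) := by
        funext t
        simp [hFdef, Set.indicator_apply, Set.mem_Ici, hs.1]
      rw [e1, integral_indicator measurableSet_Ici,
        ← ContinuousLinearMap.integral_apply (hxsint.mono_measure Measure.restrict_le_self) (g s)]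
      have hri : (volume.restrict (Set.Icc a b)).restrict (Set.Ici s) = volume.restrict (Set.Icc s b) := by
        rw [Measure.restrict_restrict measurableSet_Ici]
        congr 1
        ext t
        simp only [Set.mem_inter_iff, Set.mem_Ici, Set.mem_Icc]
        constructor
        · rintro ⟨h1, _, h3⟩; exact ⟨h1, h3⟩
        · rintro ⟨h1, h2⟩; exact ⟨h1, hs.1.trans h1, h2⟩
      rw [hri]
      by_cases hsE : s ∈ E
      · simp [hgdef, Set.indicator_of_mem hsE, hψdef]
      · simp [hgdef, Set.indicator_of_notMem hsE]
    have hys2 : (∫ t, (ys t) (g t) ∂(volume.restrict (Set.Icc a b))) = ∫ s in E, (ys s) v ∂(volume.restrict (Set.Icc a b)) := by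
      rw [← integral_indicator hE]
      refine integral_congr_ae (Eventually.of_forall fun s => ?_)
      by_cases hsE : s ∈ E <;> simp [hgdef, Set.indicator_apply, hsE]
    have hterm1 : (∫ t, (xs t) (∫ s in Set.Icc a t, g s) ∂(volume.restrict (Set.Icc a b)))
        = ∫ s in E, (ψ s) v ∂(volume.restrict (Set.Icc a b)) := by
      rw [integral_congr_ae hF1, hswap, integral_congr_ae hF3, integral_indicator hE]
    rw [hterm1, hys2] at h1
    rw [integral_add ((hψvint v).mono_measure Measure.restrict_le_self)
      ((hysvint v).mono_measure Measure.restrict_le_self)]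
    exact h1
  -- STEP D
  have stepD : ∀ v : X, ∀ᵐ s ∂(volume.restrict (Set.Icc a b)), (ψ s) v + (ys s) v = 0 := by
    intro v
    have h := Integrable.ae_eq_zero_of_forall_setIntegral_eq_zero
      ((hψvint v).add (hysvint v)) (fun E hE _ => stepC v E hE)
    filter_upwards [h] with s hs
    simpa using hs
  refine ⟨?_, by rw [husEq]⟩
  have hTm : AEStronglyMeasurable (fun s => ψ s + (ys s : X →L[ℝ] ℝ)) (volume.restrict (Set.Icc a b)) :=
    hψm.add (Lp.aestronglyMeasurable ys)
  obtain ⟨c, hc_count, hc_sub⟩ := hTm.stronglyMeasurable_mk.isSeparable_range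
  obtain ⟨f, hf⟩ := Set.Countable.exists_eq_range (hc_count.insert (0 : X →L[ℝ] ℝ))
    (Set.insert_nonempty _ _)
  have hch : ∀ n k : ℕ, ∃ w : X, ‖w‖ ≤ 1 ∧ ‖f n‖ - 1/(k+1) ≤ ‖(f n) w‖ := fun n k =>
    aux_exists_near_norm (f n) _ (by positivity)
  choose V hV1 hV2 using hch
  have hall : ∀ᵐ s ∂(volume.restrict (Set.Icc a b)), ∀ n k : ℕ, (ψ s) (V n k) + (ys s) (V n k) = 0 :=
    ae_all_iff.2 fun n => ae_all_iff.2 fun k => stepD (V n k)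
  filter_upwards [hall, hTm.ae_eq_mk] with s hs hmk
  have hmem : ψ s + (ys s : X →L[ℝ] ℝ) ∈ closure (Set.range f) := by
    rw [← hf, hmk]
    exact closure_mono (Set.subset_insert _ _) (hc_sub (Set.mem_range_self s))
  have hzero : ψ s + (ys s : X →L[ℝ] ℝ) = 0 :=
    aux_zero_of_vanish f V hV1 hV2 _ hmem (fun n k => by
      simpa [ContinuousLinearMap.add_apply] using hs n k)
  have hfin : (ys s : X →L[ℝ] ℝ) = -ψ s := eq_neg_of_add_eq_zero_right hzero
  rw [hfin, hψdef]
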